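/- If f : (0,∞) → (0,∞) satisfies (1-z)·f(x) = f(f(xz)·(1-z)/z) for all x > 0, 0 < z < 1, and f(x) < x for all x > 0, then f(u)/u · f(w)/w = f(x)/x where x = uw/f(u) + u, for all u, w > 0. -/
import Mathlib

theorem stmt5 (f : ℝ → ℝ) (hpos : ∀ x : ℝ, 0 < x → 0 < f x)
    (heq : ∀ x : ℝ, 0 < x → ∀ z : ℝ, 0 < z → z < 1 →
      (1 - z) * f x = f (f (x * z) * ((1 - z) / z)))
    (hlt : ∀ x : ℝ, 0 < x → f x < x) :
    ∀ u w : ℝ, 0 < u → 0 < w →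
      f u / u * (f w / w) = f (u * w / f u + u) / (u * w / f u + u) := by
  intro u w hu hw
  have hfu := hpos u hu
  set x := u * w / f u + u with hxdef
  have hx : 0 < x := by positivity
  have hux : u < x := lt_add_of_pos_left u (by positivity : 0 < u * w / f u)
  have hz0 : 0 < u / x := by positivity
  have hz1 : u / x < 1 := (div_lt_one hx).mpr hux
  have key := heq x hx (u / x) hz0 hz1
  have hxz : x * (u / x) = u := by field_simp
  rw [hxz] at key
  have harg : f u * ((1 - u / x) / (u / x)) = w := by
    rw [hxdef]
    field_simp
    ring
  rw [harg] at key
  have hfx := hpos x hx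
  have hwne : w ≠ 0 := ne_of_gt hw
  rw [← key, hxdef]
  field_simp
  ring
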